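/- arXiv:1708.02364 — 7 statements merged into one kernel-verified Lean document; each statement's English description precedes it below -/
import Mathlib

section
/- Let R be a commutative ring, M an Ohm-Rush R-module, and I an ideal of R. Then M/IM is an Ohm-Rush module over R/I, and for any f ∈ M, the content of the image of f in M/IM over R/I equals (c(f) + I)/I. -/
/-- The Ohm-Rush content of `f ∈ M`: the intersection of all ideals `I` of `R`
with `f ∈ I·M`. -/
noncomputable def ohmRushContent (R : Type*) {M : Type*} [CommRing R] [AddCommGroup M]
    [Module R M] (f : M) : Ideal R :=
  sInf {I : Ideal R | f ∈ I • (⊤ : Submodule R M)}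

/-- `M` is an Ohm-Rush module if `f ∈ c(f)·M` for every `f ∈ M`. -/
def IsOhmRush (R M : Type*) [CommRing R] [AddCommGroup M] [Module R M] : Prop :=
  ∀ f : M, f ∈ ohmRushContent R f • (⊤ : Submodule R M)

/-- An element of `M ⧸ IM` lies in `K • ⊤` iff a preimage lies in `(comap K) • ⊤`. -/
lemma mem_smul_top_quot_iff {R M : Type*} [CommRing R] [AddCommGroup M] [Module R M]
    (I : Ideal R) (K : Ideal (R ⧸ I)) (f : M) :
    Submodule.Quotient.mk (p := I • (⊤ : Submodule R M)) f ∈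
        K • (⊤ : Submodule (R ⧸ I) (M ⧸ (I • (⊤ : Submodule R M)))) ↔
      f ∈ (K.comap (Ideal.Quotient.mk I)) • (⊤ : Submodule R M) := by
  set N := I • (⊤ : Submodule R M) with hN
  constructor
  · intro h
    have key : ∀ y ∈ K • (⊤ : Submodule (R ⧸ I) (M ⧸ N)),
        ∃ g ∈ (K.comap (Ideal.Quotient.mk I)) • (⊤ : Submodule R M),
          Submodule.Quotient.mk (p := N) g = y := by
      intro y hy
      refine Submodule.smul_induction_on hy ?_ ?_
      · intro r hr x _
        obtain ⟨a, rfl⟩ := Ideal.Quotient.mk_surjective r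
        obtain ⟨m, rfl⟩ := Submodule.Quotient.mk_surjective N x
        exact ⟨a • m, Submodule.smul_mem_smul hr trivial, rfl⟩
      · rintro x y ⟨g, hg, rfl⟩ ⟨g', hg', rfl⟩
        exact ⟨g + g', Submodule.add_mem _ hg hg', rfl⟩
    obtain ⟨g, hg, hgf⟩ := key _ h
    have hIN : N ≤ (K.comap (Ideal.Quotient.mk I)) • (⊤ : Submodule R M) := by
      rw [hN]
      apply Submodule.smul_mono_left
      intro a ha
      simp [Ideal.mem_comap, Ideal.Quotient.eq_zero_iff_mem.2 ha]
    have hfg : f - g ∈ N := by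
      rw [← neg_sub]
      exact Submodule.neg_mem _ ((Submodule.Quotient.eq N).mp hgf)
    simpa using Submodule.add_mem _ (hIN hfg) hg
  · intro h
    refine Submodule.smul_induction_on h ?_ ?_
    · intro a ha m _
      show (Ideal.Quotient.mk I a) • (Submodule.Quotient.mk (p := N) m) ∈ _
      exact Submodule.smul_mem_smul ha trivial
    · intro x y hx hy
      rw [Submodule.Quotient.mk_add]
      exact Submodule.add_mem _ hx hy

/-- If `M` is Ohm-Rush over `R` and `I` is an ideal of `R`, then `M/IM` is Ohm-Rush over
`R/I`, and the content over `R/I` of the image of `f` equals `(c(f) + I)/I`. -/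
theorem quotient_ohmRush (R M : Type*) [CommRing R] [AddCommGroup M] [Module R M]
    (hOR : IsOhmRush R M) (I : Ideal R) :
    IsOhmRush (R ⧸ I) (M ⧸ (I • (⊤ : Submodule R M))) ∧
      ∀ f : M,
        ohmRushContent (R ⧸ I)
            (Submodule.Quotient.mk (p := I • (⊤ : Submodule R M)) f) =
          Ideal.map (Ideal.Quotient.mk I) (ohmRushContent R f) := by
  have hmem : ∀ f : M, Submodule.Quotient.mk (p := I • (⊤ : Submodule R M)) f ∈
      (Ideal.map (Ideal.Quotient.mk I) (ohmRushContent R f)) •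
        (⊤ : Submodule (R ⧸ I) (M ⧸ (I • (⊤ : Submodule R M)))) := by
    intro f
    rw [mem_smul_top_quot_iff]
    exact Submodule.smul_mono_left Ideal.le_comap_map (hOR f)
  have heq : ∀ f : M,
      ohmRushContent (R ⧸ I) (Submodule.Quotient.mk (p := I • (⊤ : Submodule R M)) f) =
        Ideal.map (Ideal.Quotient.mk I) (ohmRushContent R f) := by
    intro f
    apply le_antisymm
    · exact sInf_le (hmem f)
    · refine le_sInf fun K hK => ?_
      rw [Set.mem_setOf_eq, mem_smul_top_quot_iff] at hK
      rw [Ideal.map_le_iff_le_comap]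
      exact sInf_le hK
  refine ⟨fun g => ?_, heq⟩
  obtain ⟨f, rfl⟩ := Submodule.Quotient.mk_surjective _ g
  rw [heq f]
  exact hmem f
end

section
/- Let (R, m) → (S, n) be a flat local homomorphism of commutative local rings with n = m·S, and suppose R is Artinian and Gorenstein. Then S is Artinian and Gorenstein. -/
open IsLocalRing TensorProduct

section AuxTorsion

variable {A M : Type*} [CommRing A] [IsLocalRing A] [AddCommGroup M] [Module A M]

/-- A module over a local ring killed by the maximal ideal which is Artinian is finite. -/
lemma aux_finite_of_artinian (tors : Module.IsTorsionBySet A M (maximalIdeal A : Set A))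
    [IsArtinian A M] : Module.Finite A M := by
  letI : Module (A ⧸ maximalIdeal A) M := tors.module
  haveI : IsScalarTower A (A ⧸ maximalIdeal A) M := tors.isScalarTower
  letI : Field (A ⧸ maximalIdeal A) := Ideal.Quotient.field _
  haveI : IsArtinian (A ⧸ maximalIdeal A) M := isArtinian_of_tower A ‹IsArtinian A M›
  haveI : Module.Finite (A ⧸ maximalIdeal A) M :=
    (IsSemisimpleModule.finite_tfae.out 2 0).mp ‹_›
  exact Module.Finite.trans (A ⧸ maximalIdeal A) M

/-- A finite module over a local ring killed by the maximal ideal is Artinian. -/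
lemma aux_artinian_of_finite (tors : Module.IsTorsionBySet A M (maximalIdeal A : Set A))
    [Module.Finite A M] : IsArtinian A M := by
  letI : Module (A ⧸ maximalIdeal A) M := tors.module
  haveI : IsScalarTower A (A ⧸ maximalIdeal A) M := tors.isScalarTower
  letI : Field (A ⧸ maximalIdeal A) := Ideal.Quotient.field _
  haveI : Module.Finite (A ⧸ maximalIdeal A) M :=
    Module.Finite.of_restrictScalars_finite A _ M
  haveI hA : IsArtinian (A ⧸ maximalIdeal A) M := isArtinian_of_fg_of_artinian'
  have hsmul : ∀ (c : A ⧸ maximalIdeal A) (x : M), ∃ s : A, c • x = s • x := by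
    intro c x
    obtain ⟨s, rfl⟩ := Ideal.Quotient.mk_surjective c
    refine ⟨s, ?_⟩
    rw [← Ideal.Quotient.algebraMap_eq]
    exact algebraMap_smul _ s x
  let F : Submodule A M → Submodule (A ⧸ maximalIdeal A) M := fun P =>
    { carrier := P
      add_mem' := fun h1 h2 => P.add_mem h1 h2
      zero_mem' := P.zero_mem
      smul_mem' := fun c x hx => by
        obtain ⟨s, hs⟩ := hsmul c x
        rw [hs]
        exact P.smul_mem s hx }
  have hmemF : ∀ P x, x ∈ F P ↔ x ∈ P := fun _ _ => Iff.rfl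
  let e : Submodule A M ↪o Submodule (A ⧸ maximalIdeal A) M :=
    { toFun := F
      inj' := fun P Q h => Submodule.ext fun x => by
        rw [← hmemF P x, h, hmemF]
      map_rel_iff' := @fun P Q => ⟨fun h x hx => h hx, fun h x hx => h hx⟩ }
  exact ⟨e.wellFounded hA.wf⟩

/-- Step for showing powers of the maximal ideal of an Artinian local ring are f.g. -/
lemma aux_fg_step [IsArtinianRing A] (j : ℕ)
    (h : (maximalIdeal A ^ (j + 1)).FG) : (maximalIdeal A ^ j).FG := by
  have hle : maximalIdeal A ^ (j + 1) ≤ maximalIdeal A ^ j :=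
    Ideal.pow_le_pow_right (Nat.le_succ j)
  set N : Submodule A A := (maximalIdeal A ^ (j + 1) : Ideal A)
  refine Submodule.fg_of_fg_map_of_fg_inf_ker N.mkQ ?_ ?_
  · -- the image in A ⧸ m^(j+1) is finite
    set X : Submodule A (A ⧸ N) := Submodule.map N.mkQ (maximalIdeal A ^ j : Ideal A)
    have tors : Module.IsTorsionBySet A X (maximalIdeal A : Set A) := by
      intro v c
      obtain ⟨q, hq⟩ := v
      obtain ⟨r, hr, rfl⟩ := Submodule.mem_map.mp hq
      apply Subtype.ext
      show (c : A) • (N.mkQ r) = (0 : A ⧸ N)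
      rw [← map_smul, Submodule.mkQ_apply, Submodule.Quotient.mk_eq_zero]
      show (c : A) • r ∈ maximalIdeal A ^ (j + 1)
      rw [smul_eq_mul, mul_comm (c : A) r, pow_succ]
      exact Ideal.mul_mem_mul hr c.2
    haveI : IsArtinian A X := inferInstance
    haveI : Module.Finite A X := aux_finite_of_artinian tors
    exact Module.Finite.iff_fg.mp this
  · rw [Submodule.ker_mkQ]
    rw [inf_eq_right.mpr hle]
    exact h

end AuxTorsion

/-- Ascent of the Artinian Gorenstein property along a flat local map with
`n = m·S`.  Gorensteinness of an Artinian local ring is expressed by the socle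
(the annihilator of the maximal ideal) being one-dimensional over the residue field,
i.e. generated by a single nonzero element. -/
theorem artinian_gorenstein_ascends (R S : Type*) [CommRing R] [CommRing S]
    [IsLocalRing R] [IsLocalRing S] [Algebra R S] [Module.Flat R S]
    (hn : IsLocalRing.maximalIdeal S =
      Ideal.map (algebraMap R S) (IsLocalRing.maximalIdeal R))
    (hart : IsArtinianRing R)
    (hgor : ∃ x : R, x ≠ 0 ∧
      Submodule.annihilator (IsLocalRing.maximalIdeal R) = Ideal.span {x}) :
    IsArtinianRing S ∧ ∃ y : S, y ≠ 0 ∧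
      Submodule.annihilator (IsLocalRing.maximalIdeal S) = Ideal.span {y} := by
  classical
  haveI := hart
  obtain ⟨x, hx0, hxa⟩ := hgor
  -- nilpotency of the maximal ideal of `R`
  obtain ⟨k, hk⟩ : IsNilpotent (maximalIdeal R) := by
    have h1 := IsArtinianRing.isNilpotent_jacobson_bot (R := R)
    rwa [jacobson_eq_maximalIdeal (⊥ : Ideal R) bot_ne_top] at h1
  have hk' : maximalIdeal R ^ k = ⊥ := by rw [← Ideal.zero_eq_bot]; exact hk
  -- powers of the maximal ideal of `R` are finitely generated
  have hfg_aux : ∀ i, (maximalIdeal R ^ (k - i)).FG := by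
    intro i
    induction i with
    | zero => rw [Nat.sub_zero, hk']; exact Submodule.fg_bot
    | succ i ih =>
      rcases le_or_gt k i with h | h
      · have heq : k - (i + 1) = k - i := by omega
        rw [heq]; exact ih
      · have heq : k - i = (k - (i + 1)) + 1 := by omega
        rw [heq] at ih
        exact aux_fg_step (k - (i + 1)) ih
  have hfgm : ∀ j, (maximalIdeal R ^ j).FG := by
    intro j
    rcases le_or_gt j k with h | h
    · have heq : j = k - (k - j) := by omega
      rw [heq]; exact hfg_aux (k - j)
    · have hbot : maximalIdeal R ^ j = ⊥ := by
        rw [eq_bot_iff, ← hk']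
        exact Ideal.pow_le_pow_right (le_of_lt h)
      rw [hbot]; exact Submodule.fg_bot
  -- the maximal ideal of `S` is nilpotent with finitely generated powers
  have hnk : maximalIdeal S ^ k = ⊥ := by
    rw [hn, ← Ideal.map_pow, hk', Ideal.map_bot]
  have hfgn : ∀ j, (maximalIdeal S ^ j).FG := by
    intro j
    rw [hn, ← Ideal.map_pow]
    obtain ⟨s, hs⟩ := hfgm j
    refine ⟨s.image (algebraMap R S), ?_⟩
    rw [Finset.coe_image, ← Ideal.map_span, hs]
  -- `S` is Artinian
  have hartS : IsArtinianRing S := by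
    have hstep : ∀ j, IsArtinian S (maximalIdeal S ^ (j + 1) : Ideal S) →
        IsArtinian S (maximalIdeal S ^ j : Ideal S) := by
      intro j hj
      have hle : maximalIdeal S ^ (j + 1) ≤ maximalIdeal S ^ j :=
        Ideal.pow_le_pow_right (Nat.le_succ j)
      rw [isArtinian_iff_submodule_quotient
        (Submodule.comap (maximalIdeal S ^ j : Ideal S).subtype
          (maximalIdeal S ^ (j + 1) : Ideal S))]
      constructor
      · haveI := hj
        exact isArtinian_of_linearEquiv (Submodule.comapSubtypeEquivOfLe hle).symm
      · haveI : Module.Finite S (maximalIdeal S ^ j : Ideal S) :=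
          Module.Finite.iff_fg.mpr (hfgn j)
        apply aux_artinian_of_finite
        intro q c
        obtain ⟨b, rfl⟩ := Submodule.Quotient.mk_surjective _ q
        rw [← Submodule.Quotient.mk_smul, Submodule.Quotient.mk_eq_zero]
        refine Submodule.mem_comap.mpr ?_
        show ((c : S) • b : ↥(maximalIdeal S ^ j : Ideal S)).1 ∈ maximalIdeal S ^ (j + 1)
        rw [Submodule.coe_smul, smul_eq_mul, mul_comm (c : S) (b : S), pow_succ]
        exact Ideal.mul_mem_mul b.2 c.2
    have hdown : ∀ i, IsArtinian S (maximalIdeal S ^ (k - i) : Ideal S) := by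
      intro i
      induction i with
      | zero =>
        rw [Nat.sub_zero, hnk]
        haveI : Finite ↥(⊥ : Ideal S) := Finite.of_subsingleton
        exact isArtinian_of_finite
      | succ i ih =>
        rcases le_or_gt k i with h | h
        · have heq : k - (i + 1) = k - i := by omega
          rw [heq]; exact ih
        · have heq : k - i = (k - (i + 1)) + 1 := by omega
          rw [heq] at ih
          exact hstep _ ih
    have h0 : IsArtinian S (maximalIdeal S ^ 0 : Ideal S) := by
      have := hdown k
      rwa [Nat.sub_self] at this
    rw [pow_zero, Ideal.one_eq_top] at h0
    haveI := h0
    exact isArtinian_of_linearEquiv (Submodule.topEquiv (R := S) (M := S))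
  refine ⟨hartS, ?_⟩
  set y : S := algebraMap R S x with hy
  -- `x` kills the maximal ideal of `R`
  have hxm : ∀ t ∈ maximalIdeal R, x * t = 0 := by
    intro t ht
    have hxmem : x ∈ Submodule.annihilator (maximalIdeal R) := by
      rw [hxa]; exact Ideal.mem_span_singleton_self x
    exact Submodule.mem_annihilator.mp hxmem t ht
  -- `y` annihilates the maximal ideal of `S`
  have hy_ann : y ∈ Submodule.annihilator (maximalIdeal S) := by
    rw [Submodule.mem_annihilator]
    have hmap : maximalIdeal S ≤
        (LinearMap.ker (LinearMap.toSpanSingleton S S y) : Ideal S) := by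
      rw [hn, Ideal.map_le_iff_le_comap]
      intro t ht
      refine Ideal.mem_comap.mpr ?_
      rw [LinearMap.mem_ker, LinearMap.toSpanSingleton_apply, smul_eq_mul, hy,
        ← map_mul, mul_comm, hxm t ht, map_zero]
    intro w hw
    have h2 := hmap hw
    rw [LinearMap.mem_ker, LinearMap.toSpanSingleton_apply, smul_eq_mul] at h2
    rw [smul_eq_mul, mul_comm]
    exact h2
  -- generators of the maximal ideal of `R`
  have hmfg : (maximalIdeal R).FG := by
    have := hfgm 1; rwa [pow_one] at this
  obtain ⟨T, hT⟩ := hmfg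
  have hT' : Submodule.span R (↑T : Set R) = maximalIdeal R := hT
  -- exact sequence  R --(·x)--> R --(aᵢ·)--> Rᵗ
  let f : R →ₗ[R] ((↑T : Set R) → R) :=
    LinearMap.pi fun i => LinearMap.toSpanSingleton R R (i : R)
  let g : R →ₗ[R] R := LinearMap.toSpanSingleton R R x
  have hexact : Function.Exact g f := by
    rw [LinearMap.exact_iff]
    have h1 : LinearMap.ker f = Submodule.annihilator (maximalIdeal R) := by
      ext r
      rw [← hT', Submodule.mem_annihilator_span, LinearMap.mem_ker]
      constructor
      · intro h i
        simpa [f] using congrFun h i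
      · intro h
        funext i
        simpa [f] using h i
    rw [h1, hxa]
    exact LinearMap.span_singleton_eq_range R R x
  have hflatex : Function.Exact (LinearMap.lTensor S g) (LinearMap.lTensor S f) :=
    Module.Flat.lTensor_exact S hexact
  have key : ∀ w : S ⊗[R] R, TensorProduct.rid R S (LinearMap.lTensor S g w)
      = y * TensorProduct.rid R S w := by
    intro w
    induction w using TensorProduct.induction_on with
    | zero => simp
    | tmul s' r =>
      simp only [LinearMap.lTensor_tmul, TensorProduct.rid_tmul,
        LinearMap.toSpanSingleton_apply, g]
      rw [smul_eq_mul, Algebra.smul_def, Algebra.smul_def, map_mul, hy]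
      ring
    | add u v hu hv => rw [map_add, map_add, hu, map_add, hv, mul_add]
  have hsub : Submodule.annihilator (maximalIdeal S) ≤ (Ideal.span {y} : Ideal S) := by
    intro s hs
    have hzero : LinearMap.lTensor S f (s ⊗ₜ[R] (1 : R)) = 0 := by
      apply (LinearEquiv.map_eq_zero_iff
        (TensorProduct.piScalarRight R S S (↑T : Set R))).mp
      rw [LinearMap.lTensor_tmul]
      have hf1 : f 1 = fun i : (↑T : Set R) => (i : R) := by
        funext i; simp [f]
      rw [hf1, TensorProduct.piScalarRight_apply, TensorProduct.piScalarRightHom_tmul]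
      funext i
      show (i : R) • s = (0 : (↑T : Set R) → S) i
      have himem : algebraMap R S (i : R) ∈ maximalIdeal S := by
        rw [hn]
        exact Ideal.mem_map_of_mem _ (hT' ▸ Submodule.subset_span i.2)
      have h3 := Submodule.mem_annihilator.mp hs _ himem
      rw [smul_eq_mul] at h3
      rw [Algebra.smul_def, mul_comm]
      simpa using h3
    obtain ⟨w, hw⟩ := (hflatex (s ⊗ₜ[R] (1 : R))).mp hzero
    have hs' : s = y * TensorProduct.rid R S w := by
      rw [← key, hw, TensorProduct.rid_tmul, one_smul]
    rw [Ideal.mem_span_singleton']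
    exact ⟨TensorProduct.rid R S w, by rw [mul_comm]; exact hs'.symm⟩
  have hann : Submodule.annihilator (maximalIdeal S) = Ideal.span {y} :=
    le_antisymm hsub (by
      rw [Ideal.span_le, Set.singleton_subset_iff]; exact hy_ann)
  -- the socle of `S` is nonzero, hence `y ≠ 0`
  have hy0 : y ≠ 0 := by
    have hex : ∃ t, maximalIdeal S ^ t = ⊥ := ⟨k, hnk⟩
    have hK : maximalIdeal S ^ (Nat.find hex) = ⊥ := Nat.find_spec hex
    have hKpos : Nat.find hex ≠ 0 := by
      intro h0
      rw [h0, pow_zero, Ideal.one_eq_top] at hK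
      have : (1 : S) ∈ (⊥ : Ideal S) := hK ▸ Submodule.mem_top
      exact one_ne_zero ((Submodule.mem_bot S).mp this)
    have hprev : maximalIdeal S ^ (Nat.find hex - 1) ≠ ⊥ :=
      Nat.find_min hex (by omega)
    obtain ⟨z, hz, hz0⟩ := (Submodule.ne_bot_iff _).mp hprev
    have hzann : z ∈ Submodule.annihilator (maximalIdeal S) := by
      rw [Submodule.mem_annihilator]
      intro w hw
      have h4 : z * w ∈ maximalIdeal S ^ (Nat.find hex - 1) * maximalIdeal S :=
        Ideal.mul_mem_mul hz hw
      rw [← pow_succ] at h4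
      have hKK : Nat.find hex - 1 + 1 = Nat.find hex := by omega
      rw [hKK, hK] at h4
      simpa using h4
    rw [hann, Ideal.mem_span_singleton'] at hzann
    obtain ⟨c, hc⟩ := hzann
    intro hy0'
    rw [hy0', mul_zero] at hc
    exact hz0 hc.symm
  exact ⟨y, hy0, hann⟩
end

section
/- Let R be a commutative local ring, S a semicontent R-algebra, and f ∈ S such that the content c(f) is a principal ideal of R. Then f is Gaussian, i.e., c(f·g) = c(f)·c(g) for all g ∈ S. -/
/-- `S` is a semicontent `R`-algebra: a faithfully flat Ohm-Rush algebra such that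
for every multiplicative subset `W` of `R` and all `f, g ∈ S` with `c(f)_W = R_W`,
one has `c(fg)_W = c(g)_W`. -/
def IsSemicontentAlgebra (R S : Type*) [CommRing R] [CommRing S] [Algebra R S] : Prop :=
  Module.FaithfullyFlat R S ∧ IsOhmRush R S ∧
    ∀ (W : Submonoid R) (f g : S),
      Ideal.map (algebraMap R (Localization W)) (ohmRushContent R f) = ⊤ →
      Ideal.map (algebraMap R (Localization W)) (ohmRushContent R (f * g)) =
        Ideal.map (algebraMap R (Localization W)) (ohmRushContent R g)

/-- `f` is a Gaussian element: `c(fg) = c(f)·c(g)` for all `g ∈ S`. -/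
def IsGaussianElement (R : Type*) {S : Type*} [CommRing R] [CommRing S] [Algebra R S]
    (f : S) : Prop :=
  ∀ g : S, ohmRushContent R (f * g) = ohmRushContent R f * ohmRushContent R g

open Submodule TensorProduct Pointwise

/-- Flatness lemma: if `a • x ∈ I • ⊤` then `x ∈ (I : a) • ⊤`. -/
theorem mem_colon_smul_top_of_flat {R M : Type*} [CommRing R] [AddCommGroup M] [Module R M]
    [Module.Flat R M] {a : R} {I : Ideal R} {x : M}
    (h : a • x ∈ I • (⊤ : Submodule R M)) :
    x ∈ (I.colon (Ideal.span {a})) • (⊤ : Submodule R M) := by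
  set J := I.colon (Ideal.span {a}) with hJ
  let φ : (R ⧸ J) →ₗ[R] (R ⧸ I) :=
    Submodule.mapQ J I (LinearMap.lsmul R R a) (by
      intro r hr
      simpa [mul_comm] using Ideal.mem_colon_span_singleton.mp hr)
  have hφmk : ∀ r : R, φ (Ideal.Quotient.mk J r) = Ideal.Quotient.mk I (a * r) := by
    intro r
    rfl
  have hφ : Function.Injective φ := by
    rw [← LinearMap.ker_eq_bot, eq_bot_iff]
    intro u hu
    obtain ⟨r, rfl⟩ := Ideal.Quotient.mk_surjective u
    have : Ideal.Quotient.mk I (a * r) = 0 := by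
      rw [← hφmk]; exact hu
    have hr : r ∈ J := Ideal.mem_colon_span_singleton.mpr
      (by simpa [mul_comm] using Ideal.Quotient.eq_zero_iff_mem.mp this)
    simpa using Ideal.Quotient.eq_zero_iff_mem.mpr hr
  have hinj := Module.Flat.lTensor_preserves_injective_linearMap (M := M) φ hφ
  have h1 : (LinearMap.lTensor M φ) (x ⊗ₜ Ideal.Quotient.mk J 1) =
      x ⊗ₜ Ideal.Quotient.mk I a := by
    rw [LinearMap.lTensor_tmul, hφmk, mul_one]
  have h2 : (x ⊗ₜ Ideal.Quotient.mk I a : M ⊗[R] (R ⧸ I)) = 0 := by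
    apply (tensorQuotEquivQuotSMul M I).injective
    rw [tensorQuotEquivQuotSMul_tmul_mk, map_zero]
    exact (Submodule.Quotient.mk_eq_zero _).mpr h
  have h3 : (x ⊗ₜ Ideal.Quotient.mk J 1 : M ⊗[R] (R ⧸ J)) = 0 := by
    apply hinj; rw [h1, h2, map_zero]
  have h4 := congrArg (tensorQuotEquivQuotSMul M J) h3
  rw [tensorQuotEquivQuotSMul_tmul_mk, map_zero, one_smul] at h4
  exact (Submodule.Quotient.mk_eq_zero _).mp h4

theorem ohmRushContent_le {R M : Type*} [CommRing R] [AddCommGroup M] [Module R M]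
    {f : M} {I : Ideal R} (h : f ∈ I • (⊤ : Submodule R M)) : ohmRushContent R f ≤ I :=
  sInf_le h

theorem ohmRushContent_smul_le {R M : Type*} [CommRing R] [AddCommGroup M] [Module R M]
    {h : M} (hOR : h ∈ ohmRushContent R h • (⊤ : Submodule R M)) (a : R) :
    ohmRushContent R (a • h) ≤ Ideal.span {a} * ohmRushContent R h := by
  apply ohmRushContent_le
  rw [show Ideal.span {a} * ohmRushContent R h = Ideal.span {a} • ohmRushContent R h from rfl,
    Submodule.smul_assoc, Submodule.ideal_span_singleton_smul]
  exact Submodule.smul_mem_pointwise_smul _ _ _ hOR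

theorem le_ohmRushContent_smul {R M : Type*} [CommRing R] [AddCommGroup M] [Module R M]
    [Module.Flat R M] (h : M) (a : R) :
    Ideal.span {a} * ohmRushContent R h ≤ ohmRushContent R (a • h) := by
  apply le_sInf
  intro I hI
  have hcol : ohmRushContent R h ≤ I.colon (Ideal.span {a}) :=
    ohmRushContent_le (mem_colon_smul_top_of_flat hI)
  rw [Ideal.mul_le]
  intro r hr s hs
  obtain ⟨x, rfl⟩ := Ideal.mem_span_singleton'.mp hr
  have hsa : s * a ∈ I := by
    simpa [mul_comm] using Ideal.mem_colon_span_singleton.mp (hcol hs)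
  have hre : x * a * s = x * (s * a) := by ring
  rw [hre]
  exact Ideal.mul_mem_left _ _ hsa

theorem algebraMap_localization_bot_bijective (R : Type*) [CommRing R] :
    Function.Bijective (algebraMap R (Localization (⊥ : Submonoid R))) := by
  have H : (⊥ : Submonoid R) ≤ IsUnit.submonoid R := by
    intro x hx
    rw [Submonoid.mem_bot] at hx
    subst hx
    exact isUnit_one
  let e := IsLocalization.atUnits R (⊥ : Submonoid R) (S := Localization (⊥ : Submonoid R)) H
  have : ∀ x : R, e x = algebraMap R (Localization (⊥ : Submonoid R)) x := fun x => by
    simpa using e.commutes x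
  have heq : (algebraMap R (Localization (⊥ : Submonoid R))) = ⇑e := by
    ext x; rw [this]
  rw [heq]
  exact e.bijective

/-- In a semicontent algebra over a local ring, an element whose content is principal
is Gaussian. -/
theorem gaussian_of_principal_content (R S : Type*) [CommRing R] [CommRing S]
    [IsLocalRing R] [Algebra R S] (hsc : IsSemicontentAlgebra R S) (f : S)
    (hp : ∃ a : R, ohmRushContent R f = Ideal.span {a}) :
    IsGaussianElement R f := by
  obtain ⟨hff, hOR, hloc⟩ := hsc
  have : Module.FaithfullyFlat R S := hff
  obtain ⟨a, ha⟩ := hp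
  -- write f = a • f'
  have hf : f ∈ (a • ⊤ : Submodule R S) := by
    rw [← Submodule.ideal_span_singleton_smul, ← ha]
    exact hOR f
  have hf2 : f ∈ a • ((⊤ : Submodule R S) : Set S) := by
    rwa [← Submodule.coe_pointwise_smul]
  obtain ⟨f', -, hf'⟩ := Set.mem_smul_set.mp hf2
  -- a = a * t for some t ∈ c(f')
  have hat : ∃ t ∈ ohmRushContent R f', a * t = a := by
    have h1 : Ideal.span {a} ≤ Ideal.span {a} * ohmRushContent R f' := by
      calc Ideal.span {a} = ohmRushContent R f := ha.symm
      _ = ohmRushContent R (a • f') := by rw [hf']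
      _ ≤ Ideal.span {a} * ohmRushContent R f' := ohmRushContent_smul_le (hOR f') a
    exact Ideal.mem_span_singleton_mul.mp (h1 (Ideal.mem_span_singleton_self a))
  obtain ⟨t, ht, hta⟩ := hat
  by_cases hT : ohmRushContent R f' = ⊤
  · -- main case
    intro g
    have hmap := hloc ⊥ f' g (by rw [hT, Ideal.map_top])
    have hbij := algebraMap_localization_bot_bijective R
    have hfg : ohmRushContent R (f' * g) = ohmRushContent R g := by
      have := congrArg (Ideal.comap (algebraMap R (Localization (⊥ : Submonoid R)))) hmap
      rwa [Ideal.comap_map_of_bijective _ hbij, Ideal.comap_map_of_bijective _ hbij] at this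
    have hfg2 : f * g = a • (f' * g) := by
      rw [← hf', Algebra.smul_mul_assoc]
    rw [hfg2, ha]
    apply le_antisymm
    · exact (ohmRushContent_smul_le (hOR (f' * g)) a).trans (by rw [hfg])
    · exact (le_ohmRushContent_smul (f' * g) a).trans_eq' (by rw [hfg])
  · -- degenerate case: a = 0, f = 0
    have hmem : t ∈ IsLocalRing.maximalIdeal R := IsLocalRing.le_maximalIdeal hT ht
    have hunit : IsUnit (1 - t) := by
      have : t ∈ nonunits R := hmem
      exact IsLocalRing.isUnit_one_sub_self_of_mem_nonunits _ this
    have ha0 : a = 0 := by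
      have : a * (1 - t) = 0 := by ring_nf; rw [mul_comm] at hta; linear_combination -hta
      obtain ⟨u, hu⟩ := hunit
      calc a = a * (1 - t) * ↑u⁻¹ := by rw [← hu, mul_assoc, Units.mul_inv, mul_one]
      _ = 0 := by rw [this, zero_mul]
    have hcf : ohmRushContent R f = ⊥ := by
      rw [ha, ha0, Ideal.span_singleton_eq_bot.mpr rfl]
    have hf0 : f = 0 := by
      have := hOR f
      rw [hcf, Submodule.bot_smul, Submodule.mem_bot] at this
      exact this
    intro g
    rw [hf0] at hcf
    rw [hf0, zero_mul, hcf, bot_mul]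
end

section
/- Let R be a commutative ring and S a semicontent R-algebra. If f ∈ S has locally principal content c(f) (i.e., c(f)·R_m is principal for every maximal ideal m of R), then f is Gaussian: c(fg) = c(f)·c(g) for all g ∈ S. -/
set_option maxHeartbeats 2000000


section Helpers

variable {R S : Type*} [CommRing R] [CommRing S] [Algebra R S]

lemma mem_smulTop_iff (I : Ideal R) (f : S) :
    f ∈ I • (⊤ : Submodule R S) ↔ f ∈ I.map (algebraMap R S) := by
  rw [Ideal.smul_top_eq_map]
  rfl

lemma ohmRushContent_eq_sInf (f : S) :
    ohmRushContent R f = sInf {I : Ideal R | f ∈ I • (⊤ : Submodule R S)} := rfl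

lemma ohmRushContent_le_s7 {I : Ideal R} {f : S} (h : f ∈ I.map (algebraMap R S)) :
    ohmRushContent R f ≤ I :=
  sInf_le ((mem_smulTop_iff I f).mpr h)

lemma mem_map_content (hOR : IsOhmRush R S) (f : S) :
    f ∈ (ohmRushContent R f).map (algebraMap R S) :=
  (mem_smulTop_iff _ f).mp (hOR f)

lemma content_mul_le (hOR : IsOhmRush R S) (f g : S) :
    ohmRushContent R (f * g) ≤ ohmRushContent R f * ohmRushContent R g := by
  apply ohmRushContent_le_s7
  rw [Ideal.map_mul]
  exact Ideal.mul_mem_mul (mem_map_content hOR f) (mem_map_content hOR g)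

omit [Algebra R S] in
lemma mapEqSpan (φ : R →+* S) (I : Ideal R) : I.map φ = Submodule.span S (φ '' I) := by
  conv_lhs => rw [← Ideal.span_eq I]
  rw [Ideal.map_span]

/-- In a flat algebra, if `a·g ∈ I·S` then `g ∈ (I : a)·S`. -/
lemma flat_colon [Module.Flat R S] (a : R) (I : Ideal R) (g : S)
    (h : algebraMap R S a * g ∈ I.map (algebraMap R S)) :
    g ∈ (I.colon (Ideal.span {a})).map (algebraMap R S) := by
  set K : Ideal R := I.colon (Ideal.span {a}) with hK
  set φ : R →ₗ[R] R ⧸ I := I.mkQ ∘ₗ LinearMap.lsmul R R a with hφ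
  have hker : LinearMap.ker φ = K := by
    ext r
    simp only [hφ, LinearMap.mem_ker, LinearMap.comp_apply, LinearMap.lsmul_apply,
      Submodule.mkQ_apply, Submodule.Quotient.mk_eq_zero, smul_eq_mul, hK,
      Ideal.mem_colon_span_singleton]
    rw [mul_comm]
  have hex : Function.Exact (Submodule.subtype K) φ :=
    LinearMap.exact_iff.mpr (by rw [hker, Submodule.range_subtype])
  have tex := Module.Flat.lTensor_exact S hex
  set e := TensorProduct.tensorQuotEquivQuotSMul S I with he
  have h0 : LinearMap.lTensor S φ (g ⊗ₜ[R] (1 : R)) = 0 := by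
    apply e.injective
    rw [map_zero, LinearMap.lTensor_tmul]
    have hφ1 : φ (1 : R) = Ideal.Quotient.mk I a := by
      show I.mkQ (a • (1 : R)) = _
      rw [smul_eq_mul, mul_one]
      rfl
    rw [hφ1, TensorProduct.tensorQuotEquivQuotSMul_tmul_mk, Submodule.Quotient.mk_eq_zero,
      mem_smulTop_iff, Algebra.smul_def]
    exact h
  obtain ⟨y, hy⟩ := (tex _).mp h0
  have key : ∀ z : TensorProduct R S K,
      TensorProduct.rid R S (LinearMap.lTensor S (Submodule.subtype K) z)
        ∈ K.map (algebraMap R S) := by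
    intro z
    induction z using TensorProduct.induction_on with
    | zero => simp
    | tmul s k =>
        simp only [LinearMap.lTensor_tmul, Submodule.coe_subtype, TensorProduct.rid_tmul]
        rw [Algebra.smul_def]
        exact Ideal.mul_mem_right s _ (Ideal.mem_map_of_mem _ k.2)
    | add x y hx hy =>
        rw [map_add, map_add]
        exact add_mem hx hy
  have hg : g = TensorProduct.rid R S (LinearMap.lTensor S (Submodule.subtype K) y) := by
    rw [hy, TensorProduct.rid_tmul, one_smul]
  rw [hg]
  exact key y

lemma span_mul_content_le [Module.Flat R S] (a : R) (g : S) :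
    Ideal.span {a} * ohmRushContent R g ≤ ohmRushContent R (algebraMap R S a * g) := by
  rw [ohmRushContent_eq_sInf]
  refine le_sInf fun I hI => ?_
  have hI' : algebraMap R S a * g ∈ I.map (algebraMap R S) := (mem_smulTop_iff I _).mp hI
  have hcg : ohmRushContent R g ≤ I.colon (Ideal.span {a}) :=
    ohmRushContent_le_s7 (flat_colon a I g hI')
  rw [Ideal.mul_le]
  intro r hr b hb
  obtain ⟨x, hx⟩ := Ideal.mem_span_singleton'.mp hr
  have hba : b * a ∈ I := Ideal.mem_colon_span_singleton.mp (hcg hb)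
  have : r * b = x * (b * a) := by rw [← hx]; ring
  rw [this]
  exact Ideal.mul_mem_left _ _ hba

/-- If the image of an ideal in a local ring is principal, a generator can be chosen as the
image of an element of the ideal. -/
lemma exists_gen_of_principal_map {A B : Type*} [CommRing A] [CommRing B] [IsLocalRing B]
    (φ : A →+* B) (I : Ideal A) (hp : (I.map φ).IsPrincipal) :
    ∃ a ∈ I, I.map φ = Ideal.span {φ a} := by
  obtain ⟨⟨x, hx⟩⟩ := hp
  have hx : I.map φ = Ideal.span {x} := hx
  have hmap : I.map φ = Submodule.span B (φ '' I) := mapEqSpan φ I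
  have hxmem : x ∈ Submodule.span B (φ '' I) := by
    rw [← hmap, hx]
    exact Ideal.mem_span_singleton_self x
  obtain ⟨T, hTsub, hxT⟩ := Submodule.mem_span_finite_of_mem_span hxmem
  obtain ⟨c, -, hc⟩ := Submodule.mem_span_finset.mp hxT
  have hc' : ∑ y ∈ T, c y * y = x := by simpa [smul_eq_mul] using hc
  have hyd : ∀ y ∈ T, ∃ d, d * x = y := by
    intro y hyT
    have hy : y ∈ I.map φ := hmap ▸ Ideal.subset_span (hTsub hyT)
    rw [hx] at hy
    exact Ideal.mem_span_singleton'.mp hy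
  choose d hd using hyd
  set s : B := ∑ y ∈ T.attach, c ↑y * d ↑y y.2 with hs
  have hsx : s * x = x := by
    rw [hs, Finset.sum_mul]
    calc ∑ y ∈ T.attach, c ↑y * d ↑y y.2 * x
        = ∑ y ∈ T.attach, c ↑y * ↑y := by
          refine Finset.sum_congr rfl fun y _ => ?_
          rw [mul_assoc, hd]
      _ = ∑ y ∈ T, c y * y := Finset.sum_attach T fun y => c y * y
      _ = x := hc'
  rcases IsLocalRing.isUnit_or_isUnit_one_sub_self s with hu | hu
  · -- some summand is a unit
    have hexu : ∃ y : {x // x ∈ T}, IsUnit (c ↑y * d ↑y y.2) := by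
      by_contra hno
      push_neg at hno
      have hmem : s ∈ IsLocalRing.maximalIdeal B := by
        rw [hs]
        refine Ideal.sum_mem _ fun y _ => ?_
        exact (IsLocalRing.mem_maximalIdeal _).mpr (hno y)
      exact (IsLocalRing.mem_maximalIdeal s).mp hmem hu
    obtain ⟨⟨y, hyT⟩, hyu⟩ := hexu
    obtain ⟨v, hv⟩ := hyu
    obtain ⟨aA, haI, haφ⟩ : ∃ aA ∈ I, φ aA = y := hTsub hyT
    refine ⟨aA, haI, ?_⟩
    rw [haφ, hx]
    apply le_antisymm
    · rw [Ideal.span_singleton_le_span_singleton]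
      -- y ∣ x
      have hvx : (v : B) * x = c y * y := by
        rw [hv, mul_assoc, hd y hyT]
      refine ⟨(↑v⁻¹ : B) * c y, ?_⟩
      have : x = (↑v⁻¹ : B) * (c y * y) := by
        rw [← hvx, ← mul_assoc, Units.inv_mul, one_mul]
      rw [this]; ring
    · rw [Ideal.span_singleton_le_span_singleton]
      exact ⟨d y hyT, by rw [mul_comm]; exact (hd y hyT).symm⟩
  · -- 1 - s is a unit, so x = 0
    have hx0 : x = 0 := by
      have h0 : (1 - s) * x = 0 := by rw [sub_mul, one_mul, hsx, sub_self]
      exact (hu.mul_right_eq_zero).mp h0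
    exact ⟨0, I.zero_mem, by rw [hx, hx0, map_zero]⟩

end Helpers

/-- In a semicontent algebra, an element with locally principal content is Gaussian. -/
theorem gaussian_of_locally_principal_content (R S : Type*) [CommRing R] [CommRing S]
    [Algebra R S] (hsc : IsSemicontentAlgebra R S) (f : S)
    (hlp : ∀ m : Ideal R, ∀ _ : m.IsMaximal,
      (Ideal.map (algebraMap R (Localization m.primeCompl)) (ohmRushContent R f)).IsPrincipal) :
    IsGaussianElement R f := by
  obtain ⟨hff, hOR, hW⟩ := hsc
  haveI hflat : Module.Flat R S := hff.toFlat
  intro g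
  refine le_antisymm (content_mul_le hOR f g) ?_
  apply Ideal.le_of_localization_maximal
  intro m hm
  haveI := hm.isPrime
  obtain ⟨a, haI, ha⟩ :=
    exists_gen_of_principal_map (algebraMap R (Localization m.primeCompl))
      (ohmRushContent R f) (hlp m hm)
  -- write `u • f = a • h` for some `u ∈ W`, `h ∈ S`
  have hf' : f ∈ Submodule.span S ((algebraMap R S) '' (ohmRushContent R f)) := by
    rw [← mapEqSpan]
    exact mem_map_content hOR f
  obtain ⟨n, k, t, hsum⟩ := Submodule.mem_span_set'.mp hf'
  have hb : ∀ i, ∃ b, b ∈ ohmRushContent R f ∧ algebraMap R S b = (t i : S) := by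
    intro i
    obtain ⟨b, hb1, hb2⟩ := (t i).2
    exact ⟨b, hb1, hb2⟩
  choose b hbmem hbeq using hb
  have hspan : ∀ i, ∃ (v : m.primeCompl) (ρ : R), (v : R) * b i = ρ * a := by
    intro i
    have h1 : algebraMap R (Localization m.primeCompl) (b i)
        ∈ (ohmRushContent R f).map (algebraMap R (Localization m.primeCompl)) :=
      Ideal.mem_map_of_mem _ (hbmem i)
    rw [ha] at h1
    obtain ⟨e, he⟩ := Ideal.mem_span_singleton.mp h1
    obtain ⟨⟨r, s⟩, hrs : IsLocalization.mk' (Localization m.primeCompl) r s = e⟩ :=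
      IsLocalization.mk'_surjective m.primeCompl e
    have h2 : algebraMap R (Localization m.primeCompl) ((s : R) * b i)
        = algebraMap R (Localization m.primeCompl) (a * r) := by
      calc algebraMap R (Localization m.primeCompl) ((s : R) * b i)
          = algebraMap R (Localization m.primeCompl) (s : R)
            * algebraMap R (Localization m.primeCompl) (b i) := map_mul _ _ _
        _ = algebraMap R (Localization m.primeCompl) (s : R)
            * (algebraMap R (Localization m.primeCompl) a
               * IsLocalization.mk' (Localization m.primeCompl) r s) := by rw [he, hrs]
        _ = algebraMap R (Localization m.primeCompl) a
            * (IsLocalization.mk' (Localization m.primeCompl) r s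
               * algebraMap R (Localization m.primeCompl) (s : R)) := by ring
        _ = algebraMap R (Localization m.primeCompl) a
            * algebraMap R (Localization m.primeCompl) r := by rw [IsLocalization.mk'_spec]
        _ = algebraMap R (Localization m.primeCompl) (a * r) := (map_mul _ _ _).symm
    obtain ⟨w, hw⟩ :=
      (IsLocalization.eq_iff_exists m.primeCompl (Localization m.primeCompl)).mp h2
    refine ⟨w * s, (w : R) * r, ?_⟩
    rw [Submonoid.coe_mul, mul_assoc, hw]
    ring
  choose v ρ hv using hspan
  set u : m.primeCompl := ∏ i, v i with hu
  set h : S := ∑ i, k i * algebraMap R S (ρ i * ∏ j ∈ Finset.univ.erase i, (v j : R)) with hh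
  have huf : algebraMap R S (u : R) * f = algebraMap R S a * h := by
    rw [hh, Finset.mul_sum, ← hsum, Finset.mul_sum]
    refine Finset.sum_congr rfl fun i _ => ?_
    rw [smul_eq_mul, ← hbeq i]
    have hub : (u : R) * b i = a * (ρ i * ∏ j ∈ Finset.univ.erase i, (v j : R)) := by
      have hcoe : ((u : R)) = ∏ j, (v j : R) := by
        rw [hu]; exact SubmonoidClass.coe_finset_prod v Finset.univ
      rw [hcoe, ← Finset.mul_prod_erase Finset.univ (fun j => ((v j : R))) (Finset.mem_univ i)]
      calc (v i : R) * (∏ j ∈ Finset.univ.erase i, (v j : R)) * b i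
          = ((v i : R) * b i) * ∏ j ∈ Finset.univ.erase i, (v j : R) := by ring
        _ = (ρ i * a) * ∏ j ∈ Finset.univ.erase i, (v j : R) := by rw [hv i]
        _ = a * (ρ i * ∏ j ∈ Finset.univ.erase i, (v j : R)) := by ring
    calc algebraMap R S (u : R) * (k i * algebraMap R S (b i))
        = k i * algebraMap R S ((u : R) * b i) := by rw [map_mul]; ring
      _ = k i * algebraMap R S (a * (ρ i * ∏ j ∈ Finset.univ.erase i, (v j : R))) := by rw [hub]
      _ = algebraMap R S a
          * (k i * algebraMap R S (ρ i * ∏ j ∈ Finset.univ.erase i, (v j : R))) := by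
            rw [map_mul]; ring
  by_cases hht : (ohmRushContent R h).map (algebraMap R (Localization m.primeCompl)) = ⊤
  · have e1 := hW m.primeCompl h (algebraMap R S a * g) hht
    have heq : algebraMap R S (u : R) * (f * g) = h * (algebraMap R S a * g) := by
      rw [← mul_assoc, huf]; ring
    rw [Ideal.map_mul, ha]
    calc Ideal.span {algebraMap R (Localization m.primeCompl) a}
          * (ohmRushContent R g).map (algebraMap R (Localization m.primeCompl))
        = (Ideal.span {a} * ohmRushContent R g).map
            (algebraMap R (Localization m.primeCompl)) := by
          rw [Ideal.map_mul, Ideal.map_span, Set.image_singleton]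
      _ ≤ (ohmRushContent R (algebraMap R S a * g)).map
            (algebraMap R (Localization m.primeCompl)) :=
          Ideal.map_mono (span_mul_content_le a g)
      _ = (ohmRushContent R (h * (algebraMap R S a * g))).map
            (algebraMap R (Localization m.primeCompl)) := e1.symm
      _ = (ohmRushContent R (algebraMap R S (u : R) * (f * g))).map
            (algebraMap R (Localization m.primeCompl)) := by rw [heq]
      _ ≤ (ohmRushContent R (f * g)).map (algebraMap R (Localization m.primeCompl)) := by
          apply Ideal.map_mono
          apply ohmRushContent_le_s7
          exact Ideal.mul_mem_left _ _ (mem_map_content hOR (f * g))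
  · -- in this case the content of `f` localizes to zero
    have h1 : Ideal.span {(u : R)} * ohmRushContent R f
        ≤ Ideal.span {a} * ohmRushContent R h := by
      refine le_trans (span_mul_content_le (u : R) f) ?_
      rw [huf]
      apply ohmRushContent_le_s7
      rw [Ideal.map_mul]
      exact Ideal.mul_mem_mul (Ideal.mem_map_of_mem _ (Ideal.mem_span_singleton_self a))
        (mem_map_content hOR h)
    have h2 : (ohmRushContent R f).map (algebraMap R (Localization m.primeCompl))
        ≤ Ideal.span {algebraMap R (Localization m.primeCompl) a}
          * (ohmRushContent R h).map (algebraMap R (Localization m.primeCompl)) := by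
      have h3 := Ideal.map_mono (f := algebraMap R (Localization m.primeCompl)) h1
      rw [Ideal.map_mul, Ideal.map_mul, Ideal.map_span, Ideal.map_span, Set.image_singleton,
        Set.image_singleton] at h3
      have hu1 : Ideal.span {algebraMap R (Localization m.primeCompl) (u : R)} = ⊤ := by
        rw [Ideal.span_singleton_eq_top]
        exact IsLocalization.map_units (Localization m.primeCompl) u
      rw [hu1, Ideal.top_mul] at h3
      exact h3
    have hmax : (ohmRushContent R h).map (algebraMap R (Localization m.primeCompl))
        ≤ IsLocalRing.maximalIdeal (Localization m.primeCompl) :=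
      IsLocalRing.le_maximalIdeal hht
    have ha0 : algebraMap R (Localization m.primeCompl) a = 0 := by
      obtain ⟨z, hz, hza⟩ := Ideal.mem_span_singleton_mul.mp
        (Ideal.mul_mono_right hmax (h2 (Ideal.mem_map_of_mem _ haI)))
      have hzu : IsUnit ((1 : Localization m.primeCompl) - z) :=
        IsLocalRing.isUnit_one_sub_self_of_mem_nonunits z ((IsLocalRing.mem_maximalIdeal z).mp hz)
      have h0 : algebraMap R (Localization m.primeCompl) a * (1 - z) = 0 := by
        rw [mul_sub, mul_one, hza, sub_self]
      exact (hzu.mul_left_eq_zero).mp h0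
    rw [Ideal.map_mul, ha, ha0]
    rw [Ideal.span_singleton_eq_bot.mpr rfl, Ideal.bot_mul]
    exact bot_le
end

section
/- Let (R, m) be a local Artinian ring that is not Gorenstein, and let S be a semicontent R-algebra such that every 2-generated ideal of R is the content of some element of S. Then there exists a Gaussian element f ∈ S whose content c(f) is not a principal ideal of R. -/
/-- If `(R,m)` is a local Artinian ring that is not Gorenstein (its socle is not
generated by a single nonzero element) and `S` is a semicontent `R`-algebra such that
every 2-generated ideal of `R` is the content of some element of `S`, then `S` contains
a Gaussian element with non-principal content. -/
theorem exists_gaussian_nonprincipal_content (R S : Type*) [CommRing R] [CommRing S]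
    [IsLocalRing R] [Algebra R S]
    (hart : IsArtinianRing R)
    (hngor : ¬ ∃ x : R, x ≠ 0 ∧
      Submodule.annihilator (IsLocalRing.maximalIdeal R) = Ideal.span {x})
    (hsc : IsSemicontentAlgebra R S)
    (hcont : ∀ a b : R, ∃ f : S, ohmRushContent R f = Ideal.span {a, b}) :
    ∃ f : S, IsGaussianElement R f ∧ ¬ (ohmRushContent R f).IsPrincipal := by
  classical
  obtain ⟨hflat, hOR, hW⟩ := hsc
  set m := IsLocalRing.maximalIdeal R with hm
  set V := Submodule.annihilator m with hVdef
  -- find a nonzero element of the socle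
  obtain ⟨n, hn⟩ := hart.isNilpotent_jacobson_bot
  rw [IsLocalRing.jacobson_eq_maximalIdeal ⊥ bot_ne_top] at hn
  have hex : ∃ k, m ^ k = ⊥ := ⟨n, hn⟩
  have hn₀pos : 0 < Nat.find hex := by
    rcases Nat.eq_zero_or_pos (Nat.find hex) with h | h
    · exfalso
      have hs := Nat.find_spec hex
      rw [h, pow_zero, Ideal.one_eq_top] at hs
      have h1 : (1 : R) ∈ (⊥ : Ideal R) := hs ▸ Submodule.mem_top
      exact one_ne_zero (Ideal.mem_bot.mp h1)
    · exact h
  have hne : m ^ (Nat.find hex - 1) ≠ ⊥ := Nat.find_min hex (Nat.sub_lt hn₀pos one_pos)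
  obtain ⟨a, haMem, ha0⟩ : ∃ x, x ∈ m ^ (Nat.find hex - 1) ∧ x ≠ 0 := by
    by_contra hc
    push_neg at hc
    exact hne ((Submodule.eq_bot_iff _).mpr hc)
  have haV : a ∈ V := by
    rw [hVdef, Submodule.mem_annihilator]
    intro t ht
    have h1 : a * t ∈ m ^ Nat.find hex := by
      rw [← Nat.succ_pred_eq_of_pos hn₀pos, pow_succ]
      exact Ideal.mul_mem_mul haMem ht
    rw [Nat.find_spec hex] at h1
    simpa using h1
  -- find b in the socle outside (a)
  have hVne : V ≠ Ideal.span {a} := fun h => hngor ⟨a, ha0, h⟩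
  have hspan_le : Ideal.span {a} ≤ V := (Ideal.span_singleton_le_iff_mem _).mpr haV
  obtain ⟨b, hbV, hb⟩ : ∃ b ∈ V, b ∉ Ideal.span {a} := by
    by_contra hc
    push_neg at hc
    exact hVne (le_antisymm hc hspan_le)
  have hIV : Ideal.span {a, b} ≤ V := by
    rw [Ideal.span_le]
    rintro x (rfl | rfl)
    exacts [haV, hbV]
  -- the ideal (a, b) is not principal
  have hnp : ¬ (Ideal.span {a, b} : Ideal R).IsPrincipal := by
    rintro ⟨c, hc⟩
    have hcV : c ∈ V := hIV (hc ▸ Ideal.mem_span_singleton_self c)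
    have haC : a ∈ Ideal.span {c} := by
      rw [show Ideal.span {c} = Ideal.span {a, b} from hc.symm]
      exact Ideal.subset_span (Set.mem_insert _ _)
    obtain ⟨r, hr⟩ := Ideal.mem_span_singleton'.mp haC
    have hru : IsUnit r := by
      by_contra hnu
      have hrm : r ∈ m := hnu
      have h1 : c * r = 0 := by
        have := Submodule.mem_annihilator.mp hcV r hrm
        simpa using this
      exact ha0 (by rw [← hr, mul_comm, h1])
    obtain ⟨u, hu⟩ := hru
    have hcin : c ∈ Ideal.span {a} := by
      rw [Ideal.mem_span_singleton]
      refine ⟨(↑u⁻¹ : R), ?_⟩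
      rw [← hr, ← hu, mul_comm (↑u : R) c, mul_assoc, Units.mul_inv, mul_one]
    have hle : Ideal.span {c} ≤ Ideal.span {a} :=
      (Ideal.span_singleton_le_iff_mem _).mpr hcin
    have hbC : b ∈ Ideal.span {c} := by
      rw [show Ideal.span {c} = Ideal.span {a, b} from hc.symm]
      exact Ideal.subset_span (by simp)
    exact hb (hle hbC)
  obtain ⟨f, hf⟩ := hcont a b
  refine ⟨f, ?_, by rw [hf]; exact hnp⟩
  intro g
  by_cases hg : ohmRushContent R g = ⊤
  · -- use the semicontent property at the trivial multiplicative set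
    have h1 : Ideal.map (algebraMap R (Localization (⊥ : Submonoid R)))
        (ohmRushContent R g) = ⊤ := by rw [hg, Ideal.map_top]
    have h2 := hW ⊥ g f h1
    have hbij : Function.Bijective (algebraMap R (Localization (⊥ : Submonoid R))) := by
      constructor
      · refine IsLocalization.injective (M := (⊥ : Submonoid R)) (Localization (⊥ : Submonoid R)) (fun x hx => ?_)
        rw [Submonoid.mem_bot] at hx
        subst hx
        exact one_mem _
      · intro z
        obtain ⟨⟨x, s⟩, hs⟩ := IsLocalization.surj (⊥ : Submonoid R) z
        have hs1 : (s : R) = 1 := Submonoid.mem_bot.mp s.2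
        refine ⟨x, ?_⟩
        rw [hs1, map_one, mul_one] at hs
        exact hs.symm
    have h3 : ohmRushContent R (g * f) = ohmRushContent R f := by
      have h4 := congrArg (Ideal.comap (algebraMap R (Localization (⊥ : Submonoid R)))) h2
      rwa [Ideal.comap_map_of_bijective _ hbij, Ideal.comap_map_of_bijective _ hbij] at h4
    rw [mul_comm f g, h3, hg, Ideal.mul_top]
  · -- the content of g lies in the maximal ideal, so f * g = 0
    have hgm : ohmRushContent R g ≤ m := IsLocalRing.le_maximalIdeal hg
    have hz : ohmRushContent R f * ohmRushContent R g = ⊥ := by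
      refine le_bot_iff.mp (Ideal.mul_le.mpr fun r hr s hs => ?_)
      have hrV : r ∈ V := hIV (hf ▸ hr)
      rw [Ideal.mem_bot]
      have := Submodule.mem_annihilator.mp hrV s (hgm hs)
      simpa using this
    have hf0 : f * g = 0 := by
      have h1 : f ∈ Ideal.map (algebraMap R S) (ohmRushContent R f) := by
        have := hOR f
        rwa [Ideal.smul_top_eq_map, Submodule.restrictScalars_mem] at this
      have h2 : g ∈ Ideal.map (algebraMap R S) (ohmRushContent R g) := by
        have := hOR g
        rwa [Ideal.smul_top_eq_map, Submodule.restrictScalars_mem] at this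
      have h3 := Ideal.mul_mem_mul h1 h2
      rw [← Ideal.map_mul, hz, Ideal.map_bot] at h3
      exact Ideal.mem_bot.mp h3
    have h0 : ohmRushContent R (0 : S) = ⊥ :=
      le_bot_iff.mp (sInf_le (show (0 : S) ∈ (⊥ : Ideal R) • (⊤ : Submodule R S) from
        Submodule.zero_mem _))
    rw [hf0, h0, hz]
end

section
/- Let R be a commutative ring and S a semicontent R-algebra. If f ∈ S is such that c(f) contains a regular element (non-zerodivisor) of R, then f is a regular element of S. -/
/-- In a semicontent algebra, if `c(f)` contains a regular element of `R`, then `f` is a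
regular element of `S`. -/
theorem regular_of_content_regular (R S : Type*) [CommRing R] [CommRing S]
    [Algebra R S] (hsc : IsSemicontentAlgebra R S) (f : S)
    (hreg : ∃ r ∈ ohmRushContent R f, r ∈ nonZeroDivisors R) :
    f ∈ nonZeroDivisors S := by
  obtain ⟨r, hrc, hrnzd⟩ := hreg
  rw [mem_nonZeroDivisors_iff_right]
  intro g hg
  rw [mul_comm] at hg
  set W := Submonoid.powers r with hW
  -- c(f) maps to the unit ideal in the localization at powers of r
  have hmapf : Ideal.map (algebraMap R (Localization W)) (ohmRushContent R f) = ⊤ := by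
    apply Ideal.eq_top_of_isUnit_mem _
      (Ideal.mem_map_of_mem (algebraMap R (Localization W)) hrc)
    exact IsLocalization.map_units (Localization W) ⟨r, Submonoid.mem_powers r⟩
  have hmap := hsc.2.2 W f g hmapf
  -- c(f*g) = c(0) = ⊥
  have hzero : ohmRushContent R (f * g) = ⊥ := by
    rw [hg]
    apply le_antisymm _ bot_le
    exact sInf_le (show (0:S) ∈ (⊥:Ideal R) • (⊤ : Submodule R S) from Submodule.zero_mem _)
  rw [hzero, Ideal.map_bot] at hmap
  -- hence c(g) = ⊥
  have hcg : ohmRushContent R g = ⊥ := by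
    apply le_antisymm _ bot_le
    intro x hx
    have : algebraMap R (Localization W) x = 0 := by
      have := Ideal.mem_map_of_mem (algebraMap R (Localization W)) hx
      rw [← hmap] at this
      simpa using this
    obtain ⟨⟨m, hm⟩, hmx⟩ := (IsLocalization.map_eq_zero_iff W (Localization W) x).mp this
    obtain ⟨n, rfl⟩ := hm
    have : r ^ n ∈ nonZeroDivisors R := pow_mem hrnzd n
    exact mem_nonZeroDivisors_iff_right.mp this x (by rw [mul_comm]; simpa using hmx)
  have := hsc.2.1 g
  rw [hcg, Submodule.bot_smul] at this
  simpa using this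
end

section
/- Let R be a Noetherian commutative ring and S a semicontent R-algebra. If f ∈ S is a regular element (non-zerodivisor) of S, then c(f) contains a regular element of R. -/
lemma assocPrimes_finite (R M : Type*) [CommRing R] [AddCommGroup M] [Module R M]
    [IsNoetherianRing R] [IsNoetherian R M] :
    {q : Ideal R | q.IsPrime ∧ ∃ y : M, q = (R ∙ y).annihilator}.Finite := by
  set F : Submodule R M → Set (Ideal R) :=
    fun N => {q : Ideal R | q.IsPrime ∧ ∃ y ∈ N, q = (R ∙ y).annihilator} with hF
  have hbot : F ⊥ = ∅ := by
    ext q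
    simp only [hF, Set.mem_setOf_eq, Set.mem_empty_iff_false, iff_false, not_and]
    rintro hq ⟨y, hy, rfl⟩
    rw [Submodule.mem_bot] at hy
    subst hy
    rw [Submodule.span_singleton_eq_bot.mpr rfl, Submodule.annihilator_bot] at hq
    exact hq.ne_top rfl
  obtain ⟨N₀, hN₀, hmax⟩ := set_has_maximal_iff_noetherian.mpr (inferInstance : IsNoetherian R M)
    {N | (F N).Finite} ⟨⊥, show (F ⊥).Finite by rw [hbot]; exact Set.finite_empty⟩
  by_cases htop : N₀ = ⊤
  · subst htop
    refine hN₀.subset ?_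
    rintro q ⟨hq, y, rfl⟩
    exact ⟨hq, y, Submodule.mem_top, rfl⟩
  · exfalso
    have : Nontrivial (M ⧸ N₀) :=
      Submodule.Quotient.nontrivial_iff.mpr htop
    obtain ⟨p, hp0⟩ := associatedPrimes.nonempty R (M ⧸ N₀)
    obtain ⟨hp, x', rfl⟩ := isAssociatedPrime_iff.mp hp0
    rw [Submodule.bot_colon'] at hp
    obtain ⟨x, rfl⟩ := Submodule.Quotient.mk_surjective N₀ x'
    have hx'ne : (Submodule.Quotient.mk x : M ⧸ N₀) ≠ 0 := by
      intro h
      rw [h, Submodule.span_singleton_eq_bot.mpr rfl, Submodule.annihilator_bot] at hp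
      exact hp.ne_top rfl
    have hxN₀ : x ∉ N₀ := fun h => hx'ne ((Submodule.Quotient.mk_eq_zero _).mpr h)
    set N' := N₀ ⊔ R ∙ x with hN'
    have hlt : N₀ < N' := lt_of_le_of_ne le_sup_left
      (fun h => hxN₀ (h ▸ Submodule.mem_sup_right (Submodule.mem_span_singleton_self x)))
    apply hmax N' _ hlt
    refine (hN₀.union (Set.finite_singleton
      ((R ∙ (Submodule.Quotient.mk x : M ⧸ N₀)).annihilator))).subset ?_
    rintro q ⟨hq, y, hyN', rfl⟩
    by_cases hcase : ∃ s : R, s • y ∈ N₀ ∧ s • y ≠ 0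
    · left
      obtain ⟨s, hsN, hsne⟩ := hcase
      have hsq : s ∉ (R ∙ y).annihilator := by
        rw [Submodule.mem_annihilator_span_singleton]
        exact hsne
      refine ⟨hq, s • y, hsN, ?_⟩
      ext t
      simp only [Submodule.mem_annihilator_span_singleton]
      constructor
      · intro h
        rw [smul_comm, h, smul_zero]
      · intro h
        have hts : t * s ∈ (R ∙ y).annihilator := by
          rw [Submodule.mem_annihilator_span_singleton, mul_smul]
          exact h
        rcases hq.mem_or_mem hts with ht | hs
        · rwa [Submodule.mem_annihilator_span_singleton] at ht
        · exact absurd hs hsq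
    · right
      push_neg at hcase
      have hyN₀ : y ∉ N₀ := by
        intro h
        have h1 := hcase 1 (by simpa using h)
        rw [one_smul] at h1
        subst h1
        rw [Submodule.span_singleton_eq_bot.mpr rfl, Submodule.annihilator_bot] at hq
        exact hq.ne_top rfl
      have hmap : Submodule.map N₀.mkQ N' = R ∙ (Submodule.Quotient.mk x : M ⧸ N₀) := by
        have h1 : Submodule.map N₀.mkQ N₀ = ⊥ := by
          rw [eq_bot_iff]
          rintro z ⟨w, hw, rfl⟩
          simpa [Submodule.mkQ_apply, Submodule.Quotient.mk_eq_zero] using hw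
        rw [hN', Submodule.map_sup, Submodule.map_span, Set.image_singleton, h1, bot_sup_eq,
          Submodule.mkQ_apply]
      have hybar : (Submodule.Quotient.mk y : M ⧸ N₀) ∈
          (R ∙ (Submodule.Quotient.mk x : M ⧸ N₀)) := by
        rw [← hmap]
        exact Submodule.mem_map_of_mem hyN'
      obtain ⟨r, hr⟩ := Submodule.mem_span_singleton.mp hybar
      have hybarne : (Submodule.Quotient.mk y : M ⧸ N₀) ≠ 0 :=
        fun h => hyN₀ ((Submodule.Quotient.mk_eq_zero _).mp h)
      have hrp : r ∉ (R ∙ (Submodule.Quotient.mk x : M ⧸ N₀)).annihilator := by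
        rw [Submodule.mem_annihilator_span_singleton]
        intro h
        exact hybarne (hr ▸ h)
      have key : (R ∙ y).annihilator
          = (R ∙ (Submodule.Quotient.mk y : M ⧸ N₀)).annihilator := by
        ext t
        simp only [Submodule.mem_annihilator_span_singleton,
          ← Submodule.Quotient.mk_smul, Submodule.Quotient.mk_eq_zero]
        exact ⟨fun h => h ▸ N₀.zero_mem, fun h => hcase t h⟩
      have key2 : (R ∙ (Submodule.Quotient.mk y : M ⧸ N₀)).annihilator
          = (R ∙ (Submodule.Quotient.mk x : M ⧸ N₀)).annihilator := by
        ext t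
        simp only [Submodule.mem_annihilator_span_singleton, ← hr]
        constructor
        · intro h
          have hts : t * r ∈ (R ∙ (Submodule.Quotient.mk x : M ⧸ N₀)).annihilator := by
            rw [Submodule.mem_annihilator_span_singleton, mul_smul]
            exact h
          rcases hp.mem_or_mem hts with ht | h2
          · rwa [Submodule.mem_annihilator_span_singleton] at ht
          · exact absurd h2 hrp
        · intro h
          rw [smul_comm, h, smul_zero]
      rw [key, key2]
      rfl


/-- In a Noetherian ring, an ideal consisting of zerodivisors is contained in the
annihilator of a nonzero element. -/
lemma ideal_zerodivisors_le_ann (R : Type*) [CommRing R] [IsNoetherianRing R] [Nontrivial R]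
    (I : Ideal R) (hI : ∀ a ∈ I, a ∉ nonZeroDivisors R) :
    ∃ x : R, x ≠ 0 ∧ I ≤ (R ∙ x).annihilator := by
  have hfin := assocPrimes_finite R R
  have hsub : (I : Set R) ⊆ ⋃ p ∈ (↑hfin.toFinset : Set (Ideal R)), ((id p : Ideal R) : Set R) := by
    intro a ha
    have := hI a ha
    rw [mem_nonZeroDivisors_iff_right] at this
    push_neg at this
    obtain ⟨z, hz0, hzne⟩ := this
    obtain ⟨P, hP, hle⟩ := exists_le_isAssociatedPrime_of_isNoetherianRing R z hzne
    rw [Submodule.bot_colon'] at hle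
    have haP : a ∈ P := hle (by
      rw [Submodule.mem_annihilator_span_singleton, smul_eq_mul, mul_comm]
      exact hz0)
    refine Set.mem_biUnion ?_ haP
    show P ∈ hfin.toFinset
    rw [Set.Finite.mem_toFinset]
    obtain ⟨hP1, y, hy⟩ := isAssociatedPrime_iff.mp hP
    rw [Submodule.bot_colon'] at hy
    exact ⟨hP1, y, hy⟩
  rw [Ideal.subset_union_prime ⊥ ⊥ (fun p hp _ _ => by
    rw [Set.Finite.mem_toFinset] at hp
    exact hp.1)] at hsub
  obtain ⟨p, hps, hIp⟩ := hsub
  rw [Set.Finite.mem_toFinset] at hps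
  obtain ⟨hprime, y, rfl⟩ := hps
  refine ⟨y, ?_, hIp⟩
  intro h
  subst h
  rw [Submodule.span_singleton_eq_bot.mpr rfl, Submodule.annihilator_bot] at hprime
  exact hprime.ne_top rfl

open scoped TensorProduct in
/-- Faithfully flat algebras have injective structure map. -/
lemma algebraMap_eq_zero_imp (R S : Type*) [CommRing R] [CommRing S] [Algebra R S]
    (hff : Module.FaithfullyFlat R S) (x : R) (hx : algebraMap R S x = 0) : x = 0 := by
  set N : Submodule R R := Ideal.span {x} with hN
  have hinj : Function.Injective (LinearMap.rTensor S N.subtype) :=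
    Module.Flat.rTensor_preserves_injective_linearMap N.subtype N.injective_subtype
  have hzero : ∀ u : (↥N) ⊗[R] S, LinearMap.rTensor S N.subtype u = 0 := by
    intro u
    induction u using TensorProduct.induction_on with
    | zero => simp
    | tmul a s =>
      rw [LinearMap.rTensor_tmul]
      have ha : algebraMap R S (a : R) = 0 := by
        have ha2 : (a : R) ∈ Ideal.span {x} := a.2
        obtain ⟨r, hr⟩ := Ideal.mem_span_singleton'.mp ha2
        rw [← hr, map_mul, hx, mul_zero]
      have : (a : R) ⊗ₜ[R] s = (1 : R) ⊗ₜ[R] ((a : R) • s) := by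
        rw [TensorProduct.tmul_smul, TensorProduct.smul_tmul', smul_eq_mul, mul_one]
      rw [Submodule.coe_subtype, this, Algebra.smul_def, ha, zero_mul,
        TensorProduct.tmul_zero]
    | add u v hu hv => rw [map_add, hu, hv, add_zero]
  haveI := hff
  haveI hsing : Subsingleton ((↥N) ⊗[R] S) :=
    ⟨fun u v => hinj (by rw [hzero u, hzero v])⟩
  have : Subsingleton (↥N) := Module.FaithfullyFlat.rTensor_reflects_triviality R S ↥N
  have hx' : (⟨x, Submodule.mem_span_singleton_self x⟩ : ↥N) = ⟨0, N.zero_mem⟩ :=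
    Subsingleton.elim _ _
  exact congrArg Subtype.val hx'

/-- Over a Noetherian ring, if `f` is a regular element of a semicontent algebra `S`,
then `c(f)` contains a regular element of `R`. -/
theorem content_regular_of_regular (R S : Type*) [CommRing R] [CommRing S]
    [IsNoetherianRing R] [Algebra R S] (hsc : IsSemicontentAlgebra R S) (f : S)
    (hreg : f ∈ nonZeroDivisors S) :
    ∃ r ∈ ohmRushContent R f, r ∈ nonZeroDivisors R := by
  by_contra h
  push_neg at h
  rcases subsingleton_or_nontrivial R with hR | hR
  · exact h 0 (ohmRushContent R f).zero_mem
      (by rw [Subsingleton.elim (0 : R) 1]; exact one_mem _)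
  obtain ⟨x, hxne, hle⟩ := ideal_zerodivisors_le_ann R (ohmRushContent R f) h
  have hOR := hsc.2.1 f
  have hxf : x • f = 0 := by
    refine Submodule.smul_induction_on hOR ?_ ?_
    · intro r hr n _
      have hrx : r * x = 0 := by
        have := hle hr
        rwa [Submodule.mem_annihilator_span_singleton, smul_eq_mul] at this
      rw [smul_smul, mul_comm, hrx, zero_smul]
    · intro a b ha hb
      rw [smul_add, ha, hb, add_zero]
  rw [Algebra.smul_def] at hxf
  have : algebraMap R S x = 0 := mem_nonZeroDivisors_iff_right.mp hreg _ hxf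
  exact hxne (algebraMap_eq_zero_imp R S hsc.1 x this)
end
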